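/- Let P be an n×n symmetric positive definite matrix such that P − Id is positive definite (so the 4-tuple (0, Id, P, ∞) is maximal). Then Q = √P is the unique symmetric positive definite matrix Q satisfying Q² = P, and the cross-ratio R(P, −Q, Id, Q) = (P + Q)^{-1}·(−2Q)·(Q − Id)^{-1}·(P − Id) equals 2·Id; i.e. the tube Y_{−√P, √P} is the unique tube orthogonal to both Y_{0,∞} and Y_{Id, P}. -/

import Mathlib

open Matrix

/-- If `P` is symmetric positive definite with `P − Id` positive definite, then `P` has a
unique positive definite square root `Q`, and for this `Q` the cross-ratio identity
`(P + Q)⁻¹ · (2Q) · (Q − Id)⁻¹ · (P − Id) = 2·Id` holds, i.e. the tube `Y_{−√P,√P}` is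
orthogonal to both `Y_{0,∞}` and `Y_{Id,P}`. -/
theorem stmt5 (n : ℕ) (P : Matrix (Fin n) (Fin n) ℝ) (hP : P.PosDef)
    (hP1 : (P - 1).PosDef) :
    (∃! Q : Matrix (Fin n) (Fin n) ℝ, Q.PosDef ∧ Q * Q = P) ∧
    (∀ Q : Matrix (Fin n) (Fin n) ℝ, Q.PosDef → Q * Q = P →
      (P + Q)⁻¹ * ((2 : ℝ) • Q) * (Q - 1)⁻¹ * (P - 1)
        = (2 : ℝ) • (1 : Matrix (Fin n) (Fin n) ℝ)) := by
  constructor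
  · -- existence and uniqueness of the positive definite square root
    open scoped MatrixOrder in
    refine ⟨CFC.sqrt P, ⟨?_, ?_⟩, ?_⟩
    · -- sqrt is PosDef
      have hs := (CFC.sqrt_nonneg P).posSemidef
      rw [hs.posDef_iff_det_ne_zero, hP.posSemidef.det_sqrt]
      rw [RCLike.sqrt_of_nonneg hP.posSemidef.det_nonneg]
      simpa using (Real.sqrt_pos.mpr hP.det_pos).ne'
    · exact CFC.sqrt_mul_sqrt_self P hP.posSemidef.nonneg
    · rintro Q ⟨hQ, hQ2⟩
      exact (CFC.sqrt_unique hQ2 hQ.posSemidef.nonneg).symm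
  · intro Q hQ hQQ
    -- invertibility facts
    have hQ1 : (Q + 1).PosDef := hQ.add Matrix.PosDef.one
    have hdQ : IsUnit Q.det := isUnit_iff_ne_zero.mpr hQ.det_pos.ne'
    have hdQ1 : IsUnit (Q + 1).det := isUnit_iff_ne_zero.mpr hQ1.det_pos.ne'
    have hdP1 : IsUnit (P - 1).det := isUnit_iff_ne_zero.mpr hP1.det_pos.ne'
    have hfact : (Q + 1) * (Q - 1) = P - 1 := by rw [← hQQ]; noncomm_ring
    have hfact' : (Q - 1) * (Q + 1) = P - 1 := by rw [← hQQ]; noncomm_ring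
    have hdQm1 : IsUnit (Q - 1).det := by
      have : (Q + 1).det * (Q - 1).det = (P - 1).det := by rw [← det_mul, hfact]
      exact isUnit_of_mul_isUnit_right (by rw [this]; exact hdP1)
    have hPQ : P + Q = Q * (Q + 1) := by rw [← hQQ]; noncomm_ring
    haveI := Q.invertibleOfIsUnitDet hdQ
    haveI := (Q + 1).invertibleOfIsUnitDet hdQ1
    haveI := (Q - 1).invertibleOfIsUnitDet hdQm1
    rw [hPQ, ← hfact', Matrix.mul_inv_rev]
    have h1 : (Q + 1)⁻¹ * Q⁻¹ * ((2 : ℝ) • Q) = (2 : ℝ) • (Q + 1)⁻¹ := by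
      rw [mul_smul_comm, Matrix.mul_assoc, Matrix.nonsing_inv_mul _ hdQ, Matrix.mul_one]
    rw [h1, smul_mul_assoc, smul_mul_assoc, Matrix.mul_assoc,
      Matrix.inv_mul_cancel_left_of_invertible, Matrix.nonsing_inv_mul _ hdQ1]
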